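/- The rational function β(z) = 16384 z(z − 1)⁷/(896z³ − 2912z² + 3216z − 1225) is a Belyi function: for every complex number z with 896z³ − 2912z² + 3216z − 1225 ≠ 0, if the derivative of β vanishes at z, then β(z) = 0 or β(z) = 1. -/

import Mathlib

/-- The rational function `β(z) = 16384 z(z − 1)⁷/(896z³ − 2912z² + 3216z − 1225)` is a
Belyi function: all of its finite critical values lie in `{0, 1}`. -/
theorem belyi_S71_5111 (β : ℂ → ℂ)
    (hβ : ∀ z, β z = 16384 * (z * (z - 1) ^ 7) /
      (896 * z ^ 3 - 2912 * z ^ 2 + 3216 * z - 1225)) :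
    ∀ z : ℂ, 896 * z ^ 3 - 2912 * z ^ 2 + 3216 * z - 1225 ≠ 0 →
      deriv β z = 0 → β z = 0 ∨ β z = 1 := by
  intro z hQ hd
  have hfun : β = fun z => 16384 * (z * (z - 1) ^ 7) /
      (896 * z ^ 3 - 2912 * z ^ 2 + 3216 * z - 1225) := funext hβ
  have hN : HasDerivAt (fun z : ℂ => 16384 * (z * (z - 1) ^ 7))
      (16384 * ((z - 1) ^ 7 + z * (7 * (z - 1) ^ 6))) z := by
    have h1 : HasDerivAt (fun z : ℂ => z * (z - 1) ^ 7)
        ((z - 1) ^ 7 + z * (7 * (z - 1) ^ 6)) z := by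
      have h2 := ((hasDerivAt_id z).sub_const 1).pow 7
      have := (hasDerivAt_id z).mul h2
      simpa [mul_comm, mul_assoc, mul_left_comm, Pi.mul_def, Pi.pow_def] using this
    simpa [mul_comm, mul_assoc, mul_left_comm] using h1.const_mul (16384 : ℂ)
  have hQd : HasDerivAt (fun z : ℂ => 896 * z ^ 3 - 2912 * z ^ 2 + 3216 * z - 1225)
      (896 * (3 * z ^ 2) - 2912 * (2 * z) + 3216) z := by
    have h3 := (hasDerivAt_pow 3 z).const_mul (896 : ℂ)
    have h2 := (hasDerivAt_pow 2 z).const_mul (2912 : ℂ)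
    have h1 := (hasDerivAt_id z).const_mul (3216 : ℂ)
    have := (((h3.sub h2).add h1).sub_const (1225 : ℂ))
    simpa [mul_comm, mul_assoc, mul_left_comm] using this
  have hβd : HasDerivAt β
      ((16384 * ((z - 1) ^ 7 + z * (7 * (z - 1) ^ 6)) *
          (896 * z ^ 3 - 2912 * z ^ 2 + 3216 * z - 1225) -
        16384 * (z * (z - 1) ^ 7) * (896 * (3 * z ^ 2) - 2912 * (2 * z) + 3216)) /
        (896 * z ^ 3 - 2912 * z ^ 2 + 3216 * z - 1225) ^ 2) z := by
    rw [hfun]; exact hN.div hQd hQ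
  rw [hβd.deriv] at hd
  have hQ2 : (896 * z ^ 3 - 2912 * z ^ 2 + 3216 * z - 1225 : ℂ) ^ 2 ≠ 0 := pow_ne_zero _ hQ
  have hnum : 16384 * ((z - 1) ^ 7 + z * (7 * (z - 1) ^ 6)) *
          (896 * z ^ 3 - 2912 * z ^ 2 + 3216 * z - 1225) -
        16384 * (z * (z - 1) ^ 7) * (896 * (3 * z ^ 2) - 2912 * (2 * z) + 3216) = 0 := by
    rcases div_eq_zero_iff.mp hd with h | h
    · exact h
    · exact absurd h hQ2
  have hfact : (573440 : ℂ) * ((z - 1) ^ 6 *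
      (128 * z ^ 4 - 448 * z ^ 3 + 560 * z ^ 2 - 280 * z + 35)) = 0 := by
    rw [← hnum]; ring
  have h6P : (z - 1) ^ 6 * (128 * z ^ 4 - 448 * z ^ 3 + 560 * z ^ 2 - 280 * z + 35) = 0 := by
    rcases mul_eq_zero.mp hfact with h | h
    · norm_num at h
    · exact h
  rcases mul_eq_zero.mp h6P with h | hP
  · left
    have hz1 : z = 1 := sub_eq_zero.mp (pow_eq_zero_iff (n := 6) (by norm_num) |>.mp h)
    rw [hβ, hz1]; norm_num
  · right
    rw [hβ, div_eq_one_iff_eq hQ]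
    linear_combination (128 * z ^ 4 - 448 * z ^ 3 + 560 * z ^ 2 - 280 * z + 35) * hP
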